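/- There is an absolute constant C > 0 such that the following holds. Let δ ∈ 2^{-ℕ}, let C₁, C₂, C₃ > 0, and let A, B ⊆ δ·ℤ be finite sets with |A + A| ≤ C₁|A| and |B + B| ≤ C₂|B|. Let c ∈ ℝ, and let G ⊆ A × B be a subset with |G| ≥ |A||B|/C₃. Then |A + cB|_δ ≤ C · C₁C₂C₃ · |π_c(G)|_δ. -/

import Mathlib

open MeasureTheory Metric Set Pointwise

/-- δ is a dyadic scale: δ = 2^{-j} for some j ∈ ℕ. -/
def isDyadic (δ : ℝ) : Prop := ∃ j : ℕ, δ = 2 ^ (-(j : ℤ))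

/-- The δ-grid (δ·ℤ) ∩ [0,1]. -/
def grid (δ : ℝ) : Set ℝ := {x : ℝ | (∃ k : ℤ, x = (k : ℝ) * δ) ∧ x ∈ Set.Icc (0:ℝ) 1}

/-- δ·ℤ -/
def gridZ (δ : ℝ) : Set ℝ := {x : ℝ | ∃ k : ℤ, x = (k : ℝ) * δ}

/-- Least number of dyadic intervals of length δ needed to cover X. -/
noncomputable def covN (δ : ℝ) (X : Set ℝ) : ℕ :=
  sInf {n : ℕ | ∃ s : Finset ℤ, s.card = n ∧
    X ⊆ ⋃ k ∈ s, Set.Ico ((k : ℝ) * δ) (((k : ℝ) + 1) * δ)}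

/-- Support of a measure on ℝ. -/
def sptm (ν : Measure ℝ) : Set ℝ := {x : ℝ | ∀ ε > 0, 0 < ν (Metric.ball x ε)}

/-- The projection π_c(x,y) = x + cy. -/
def piC (c : ℝ) : ℝ × ℝ → ℝ := fun p => p.1 + c * p.2

/-- The exceptional set 𝓔(A∣B,ε): those c for which some large subset B' ⊆ B has
|A + cB'|_δ < δ^{-ε}|A|. -/
noncomputable def Eexc (δ ε : ℝ) (A B : Set ℝ) : Set ℝ :=
  {c : ℝ | ∃ B' ⊆ B, δ ^ ε * (B.ncard : ℝ) ≤ (B'.ncard : ℝ) ∧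
    (covN δ (A + c • B') : ℝ) < δ ^ (-ε) * (A.ncard : ℝ)}

/-- k-fold sumset (sumN 0 A = {0}). -/
def sumN : ℕ → Set ℝ → Set ℝ
  | 0, _ => {0}
  | (n+1), A => sumN n A + A


lemma mem_Ico_iff_floor {δ : ℝ} (hδ : 0 < δ) (x : ℝ) (k : ℤ) :
    x ∈ Set.Ico ((k : ℝ) * δ) (((k : ℝ) + 1) * δ) ↔ ⌊x / δ⌋ = k := by
  rw [Set.mem_Ico, Int.floor_eq_iff]
  constructor
  · rintro ⟨h1, h2⟩
    exact ⟨(le_div_iff₀ hδ).2 h1, (div_lt_iff₀ hδ).2 h2⟩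
  · rintro ⟨h1, h2⟩
    exact ⟨(le_div_iff₀ hδ).1 h1, (div_lt_iff₀ hδ).1 h2⟩

lemma covN_eq_card {δ : ℝ} (hδ : 0 < δ) {X : Set ℝ} (hX : X.Finite) :
    covN δ X = (hX.toFinset.image (fun x => ⌊x / δ⌋)).card := by
  set s₀ := hX.toFinset.image (fun x => ⌊x / δ⌋) with hs₀
  have hcov : X ⊆ ⋃ k ∈ s₀, Set.Ico ((k : ℝ) * δ) (((k : ℝ) + 1) * δ) := by
    intro x hx
    have h1 : ⌊x / δ⌋ ∈ s₀ := Finset.mem_image.2 ⟨x, hX.mem_toFinset.2 hx, rfl⟩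
    exact Set.mem_biUnion h1 ((mem_Ico_iff_floor hδ x _).2 rfl)
  have hmem : s₀.card ∈ {n : ℕ | ∃ s : Finset ℤ, s.card = n ∧
      X ⊆ ⋃ k ∈ s, Set.Ico ((k : ℝ) * δ) (((k : ℝ) + 1) * δ)} := ⟨s₀, rfl, hcov⟩
  refine le_antisymm (Nat.sInf_le hmem) (le_csInf ⟨_, hmem⟩ ?_)
  rintro n ⟨s, rfl, hs⟩
  refine Finset.card_le_card ?_
  intro k hk
  obtain ⟨x, hxX, hxk⟩ := Finset.mem_image.1 hk
  obtain ⟨k', hk', hx'⟩ := Set.mem_iUnion₂.1 (hs (hX.mem_toFinset.1 hxX))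
  rwa [show k' = k from ((mem_Ico_iff_floor hδ x k').1 hx').symm.trans hxk] at hk'

lemma key_floor {δ : ℝ} (hδ : 0 < δ) {x x₀ u u₀ : ℝ} (hxu : x - x₀ = u₀ - u)
    (h : ⌊u / δ⌋ = ⌊u₀ / δ⌋) :
    ⌊x / δ⌋ = ⌊x₀ / δ⌋ - 1 ∨ ⌊x / δ⌋ = ⌊x₀ / δ⌋ ∨ ⌊x / δ⌋ = ⌊x₀ / δ⌋ + 1 := by
  have f1 : (⌊u / δ⌋ : ℝ) ≤ u / δ := Int.floor_le _
  have f2 : u / δ < ⌊u / δ⌋ + 1 := Int.lt_floor_add_one _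
  have f3 : (⌊u₀ / δ⌋ : ℝ) ≤ u₀ / δ := Int.floor_le _
  have f4 : u₀ / δ < ⌊u₀ / δ⌋ + 1 := Int.lt_floor_add_one _
  rw [h] at f1 f2
  have heq : x / δ - x₀ / δ = u₀ / δ - u / δ := by field_simp; linarith
  have h3 : ⌊x / δ⌋ ≤ ⌊x₀ / δ⌋ + 1 := by
    have := Int.floor_le_floor (R := ℝ) (show x / δ ≤ x₀ / δ + 1 by linarith)
    rwa [Int.floor_add_one] at this
  have h4 : ⌊x₀ / δ⌋ ≤ ⌊x / δ⌋ + 1 := by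
    have := Int.floor_le_floor (R := ℝ) (show x₀ / δ ≤ x / δ + 1 by linarith)
    rwa [Int.floor_add_one] at this
  omega


set_option maxHeartbeats 800000 in
/-- Lemma 2.7: if A, B have small doubling, then for any large G ⊆ A × B,
|A + cB|_δ ≲ C₁C₂C₃ |π_c(G)|_δ. -/

theorem stmt7 :
    ∃ C : ℝ, 0 < C ∧
    ∀ δ : ℝ, isDyadic δ →
    ∀ C₁ C₂ C₃ : ℝ, 0 < C₁ → 0 < C₂ → 0 < C₃ →
    ∀ A B : Set ℝ, A.Finite → B.Finite → A ⊆ gridZ δ → B ⊆ gridZ δ →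
    ((A + A).ncard : ℝ) ≤ C₁ * (A.ncard : ℝ) →
    ((B + B).ncard : ℝ) ≤ C₂ * (B.ncard : ℝ) →
    ∀ c : ℝ, ∀ G ⊆ A ×ˢ B,
    ((A.ncard : ℝ) * (B.ncard : ℝ)) / C₃ ≤ (G.ncard : ℝ) →
    (covN δ (A + c • B) : ℝ) ≤ C * (C₁ * C₂ * C₃) * (covN δ (piC c '' G) : ℝ) := by
  refine ⟨3, by norm_num, ?_⟩
  intro δ hdy C₁ C₂ C₃ hC₁ hC₂ hC₃ A B hA hB _ _ hAA hBB c G hG hGcard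
  obtain ⟨j, rfl⟩ := hdy
  have hδ : (0:ℝ) < 2 ^ (-(j : ℤ)) := by positivity
  set δ := (2:ℝ) ^ (-(j : ℤ)) with hδdef
  -- trivial case: A or B empty
  by_cases hAB : A = ∅ ∨ B = ∅
  · have hS : A + c • B = ∅ := by
      rcases hAB with h | h <;> simp [h]
    rw [hS]
    have h0 : covN δ (∅ : Set ℝ) = 0 := by
      rw [covN_eq_card hδ Set.finite_empty]; simp
    rw [h0]
    push_cast
    positivity
  push_neg at hAB
  obtain ⟨hAne, hBne⟩ := hAB
  have hS : (A + c • B).Finite := hA.add hB.smul_set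
  have hGfin : G.Finite := (hA.prod hB).subset hG
  have hPG : (piC c '' G).Finite := hGfin.image _
  have hAAfin : (A + A).Finite := hA.add hA
  have hBBfin : (B + B).Finite := hB.add hB
  classical
  set f : ℝ → ℤ := fun x => ⌊x / δ⌋ with hf
  set K : Finset ℤ := hS.toFinset.image f with hK
  set M : Finset ℤ := hPG.toFinset.image f with hM
  set FG : Finset (ℝ × ℝ) := hGfin.toFinset with hFG
  set PAA : Finset ℝ := hAAfin.toFinset with hPAA
  set PBB : Finset ℝ := hBBfin.toFinset with hPBB
  -- choice of representatives
  set φ : ℤ → ℝ × ℝ := fun k =>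
    if h : ∃ p : ℝ × ℝ, p.1 ∈ A ∧ p.2 ∈ B ∧ f (p.1 + c * p.2) = k then h.choose
    else (0, 0) with hφdef
  have hφ : ∀ k ∈ K, (φ k).1 ∈ A ∧ (φ k).2 ∈ B ∧ f ((φ k).1 + c * (φ k).2) = k := by
    intro k hk
    obtain ⟨x, hx, hfx⟩ := Finset.mem_image.1 hk
    obtain ⟨a, ha, y, hy, rfl⟩ := Set.mem_add.1 (hS.mem_toFinset.1 hx)
    obtain ⟨b, hb, rfl⟩ := hy
    have hex : ∃ p : ℝ × ℝ, p.1 ∈ A ∧ p.2 ∈ B ∧ f (p.1 + c * p.2) = k :=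
      ⟨(a, b), ha, hb, by simpa [smul_eq_mul] using hfx⟩
    simp only [hφdef, dif_pos hex]
    exact hex.choose_spec
  -- the counting map
  set F : ℤ × (ℝ × ℝ) → ℝ × ℝ × ℤ := fun q =>
    ((φ q.1).1 + q.2.1, ((φ q.1).2 + q.2.2, f (q.2.1 + c * q.2.2))) with hFdef
  have himg : (K ×ˢ FG).image F ⊆ PAA ×ˢ (PBB ×ˢ M) := by
    intro v hv
    obtain ⟨q, hq, rfl⟩ := Finset.mem_image.1 hv
    obtain ⟨hq1, hq2⟩ := Finset.mem_product.1 hq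
    obtain ⟨hpa, hpb, _⟩ := hφ _ hq1
    have hq2' : q.2 ∈ G := hGfin.mem_toFinset.1 hq2
    have hqAB := hG hq2'
    rw [Set.mem_prod] at hqAB
    refine Finset.mem_product.2 ⟨?_, Finset.mem_product.2 ⟨?_, ?_⟩⟩
    · exact hAAfin.mem_toFinset.2 (Set.add_mem_add hpa hqAB.1)
    · exact hBBfin.mem_toFinset.2 (Set.add_mem_add hpb hqAB.2)
    · exact Finset.mem_image.2 ⟨piC c q.2, hPG.mem_toFinset.2 ⟨q.2, hq2', rfl⟩, rfl⟩
  -- fiber bound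
  have hfiber : ∀ v ∈ (K ×ˢ FG).image F,
      ((K ×ˢ FG).filter (fun q => F q = v)).card ≤ 3 := by
    intro v hv
    obtain ⟨q₀, hq₀, hq₀v⟩ := Finset.mem_image.1 hv
    set T := (K ×ˢ FG).filter (fun q => F q = v) with hT
    have hq₀T : q₀ ∈ T := Finset.mem_filter.2 ⟨hq₀, hq₀v⟩
    have hinj : Set.InjOn Prod.fst (T : Set (ℤ × (ℝ × ℝ))) := by
      intro q hq q' hq' hqq
      have h1 := (Finset.mem_filter.1 hq).2
      have h2 := (Finset.mem_filter.1 hq').2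
      have he : F q = F q' := h1.trans h2.symm
      simp only [hFdef, Prod.mk.injEq] at he
      rw [hqq] at he
      have e1 : q.2.1 = q'.2.1 := by linarith [he.1]
      have e2 : q.2.2 = q'.2.2 := by linarith [he.2.1]
      exact Prod.ext hqq (Prod.ext e1 e2)
    have hsub : T.image Prod.fst ⊆ {q₀.1 - 1, q₀.1, q₀.1 + 1} := by
      intro k hk
      obtain ⟨q, hq, rfl⟩ := Finset.mem_image.1 hk
      have h1 := Finset.mem_filter.1 hq
      have h2 : F q = F q₀ := h1.2.trans hq₀v.symm
      have hk1 : q.1 ∈ K := (Finset.mem_product.1 h1.1).1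
      have hk0 : q₀.1 ∈ K := (Finset.mem_product.1 hq₀).1
      obtain ⟨_, _, hx⟩ := hφ _ hk1
      obtain ⟨_, _, hx₀⟩ := hφ _ hk0
      simp only [hFdef, Prod.mk.injEq] at h2
      obtain ⟨e1, e2, e3⟩ := h2
      have hxu : ((φ q.1).1 + c * (φ q.1).2) - ((φ q₀.1).1 + c * (φ q₀.1).2)
          = (q₀.2.1 + c * q₀.2.2) - (q.2.1 + c * q.2.2) := by
        have e2' : c * ((φ q.1).2 + q.2.2) = c * ((φ q₀.1).2 + q₀.2.2) := by rw [e2]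
        rw [mul_add, mul_add] at e2'
        linarith [e1, e2']
      have := key_floor hδ hxu e3
      simp only [hf] at hx hx₀
      rw [hx, hx₀] at this
      simp only [Finset.mem_insert, Finset.mem_singleton]
      omega
    calc T.card = (T.image Prod.fst).card := (Finset.card_image_of_injOn hinj).symm
      _ ≤ ({q₀.1 - 1, q₀.1, q₀.1 + 1} : Finset ℤ).card := Finset.card_le_card hsub
      _ ≤ 3 := Finset.card_insert_le _ _ |>.trans (by
            exact Nat.succ_le_succ (Finset.card_insert_le _ _))
  -- the counting inequality
  have hcount : K.card * FG.card ≤ 3 * (PAA.card * (PBB.card * M.card)) := by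
    have h1 := Finset.card_le_mul_card_image (K ×ˢ FG) 3 hfiber
    rw [Finset.card_product] at h1
    refine h1.trans ?_
    refine Nat.mul_le_mul_left 3 ?_
    calc ((K ×ˢ FG).image F).card ≤ (PAA ×ˢ (PBB ×ˢ M)).card := Finset.card_le_card himg
      _ = PAA.card * (PBB.card * M.card) := by rw [Finset.card_product, Finset.card_product]
  -- translate to covN / ncard
  have hcovS : covN δ (A + c • B) = K.card := covN_eq_card hδ hS
  have hcovM : covN δ (piC c '' G) = M.card := covN_eq_card hδ hPG
  have hGcard' : G.ncard = FG.card := Set.ncard_eq_toFinset_card _ hGfin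
  have hAAcard : (A + A).ncard = PAA.card := Set.ncard_eq_toFinset_card _ hAAfin
  have hBBcard : (B + B).ncard = PBB.card := Set.ncard_eq_toFinset_card _ hBBfin
  rw [hcovS, hcovM]
  rw [hAAcard] at hAA
  rw [hBBcard] at hBB
  rw [hGcard'] at hGcard
  have hcountR : (K.card : ℝ) * FG.card ≤ 3 * ((PAA.card : ℝ) * ((PBB.card : ℝ) * M.card)) := by
    exact_mod_cast hcount
  have ha : (0:ℝ) < (A.ncard : ℝ) := by exact_mod_cast (Set.ncard_pos hA).2 hAne
  have hb : (0:ℝ) < (B.ncard : ℝ) := by exact_mod_cast (Set.ncard_pos hB).2 hBne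
  have hab : (A.ncard : ℝ) * B.ncard ≤ (FG.card : ℝ) * C₃ := by
    rwa [div_le_iff₀ hC₃] at hGcard
  have h3 : (0:ℝ) < 3 := by norm_num
  have hM0 : (0:ℝ) ≤ (M.card : ℝ) := Nat.cast_nonneg _
  have hK0 : (0:ℝ) ≤ (K.card : ℝ) := Nat.cast_nonneg _
  have hPBB0 : (0:ℝ) ≤ (PBB.card : ℝ) := Nat.cast_nonneg _
  have hPAA0 : (0:ℝ) ≤ (PAA.card : ℝ) := Nat.cast_nonneg _
  have s1 : (K.card : ℝ) * ((A.ncard : ℝ) * B.ncard) ≤ ((K.card : ℝ) * FG.card) * C₃ := by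
    have := mul_le_mul_of_nonneg_left hab hK0
    linarith [this]
  have s2 : ((K.card : ℝ) * FG.card) * C₃ ≤ (3 * ((PAA.card : ℝ) * ((PBB.card : ℝ) * M.card))) * C₃ :=
    mul_le_mul_of_nonneg_right hcountR hC₃.le
  have s3 : (PAA.card : ℝ) * ((PBB.card : ℝ) * M.card) ≤ (C₁ * A.ncard) * ((C₂ * B.ncard) * M.card) :=
    mul_le_mul hAA (mul_le_mul_of_nonneg_right hBB hM0)
      (mul_nonneg hPBB0 hM0) (le_trans hPAA0 hAA)
  have step : (K.card : ℝ) * ((A.ncard : ℝ) * B.ncard)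
      ≤ (3 * (C₁ * C₂ * C₃) * (M.card : ℝ)) * ((A.ncard : ℝ) * B.ncard) := by
    have s4 : (3 * ((PAA.card : ℝ) * ((PBB.card : ℝ) * M.card))) * C₃
        ≤ (3 * ((C₁ * A.ncard) * ((C₂ * B.ncard) * M.card))) * C₃ := by
      refine mul_le_mul_of_nonneg_right ?_ hC₃.le
      exact mul_le_mul_of_nonneg_left s3 h3.le
    have s5 : (3 * ((C₁ * A.ncard) * ((C₂ * B.ncard) * M.card))) * C₃
        = (3 * (C₁ * C₂ * C₃) * (M.card : ℝ)) * ((A.ncard : ℝ) * B.ncard) := by ring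
    linarith [s1, s2, s4]
  exact le_of_mul_le_mul_right step (mul_pos ha hb)
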